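/- (Theorem 1, discounted version.) Suppose the transition kernel is independent of actions and the reward depends only on the current state and action. Then for every discount factor γ with 0 ≤ γ < 1 and every initial state s, the supremum over all stationary stochastic policies π of the discounted value V^γ_π(s) equals Σ_{t=1}^{∞} γ^{t−1} · Σ_{s' ∈ S} P^{t−1}(s, s') · max_{a ∈ A} r(s', a), and this supremum is attained by any deterministic greedy policy assigning to each state the point mass at an action maximizing the single-step reward r(s', ·). -/

import Mathlib

open Finset Classical

noncomputable section

/-- `Pn P t s s'` is the `t`-step transition probability of the (policy-independent)
state chain with one-step kernel `P`. -/
noncomputable def Pn {S : Type*} [Fintype S] (P : S → S → ℝ) : ℕ → S → S → ℝ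
  | 0 => fun s s' => if s = s' then 1 else 0
  | (t + 1) => fun s s' => ∑ u, Pn P t s u * P u s'

/-- The `γ`-discounted value of a stationary stochastic policy `π` from state `s`,
under an action-independent transition kernel `P` and reward `r`. -/
noncomputable def Vdisc {S A : Type*} [Fintype S] [Fintype A]
    (P : S → S → ℝ) (r : S → A → ℝ) (γ : ℝ) (π : S → PMF A) (s : S) : ℝ :=
  ∑' t : ℕ, γ ^ t * ∑ s', Pn P t s s' * (∑ a, ((π s') a).toReal * r s' a)

lemma Pn_nonneg {S : Type*} [Fintype S] (P : S → S → ℝ) (hP0 : ∀ s s', 0 ≤ P s s') :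
    ∀ t s s', 0 ≤ Pn P t s s' := by
  intro t
  induction t with
  | zero => intro s s'; simp only [Pn]; split <;> norm_num
  | succ t ih =>
      intro s s'
      simp only [Pn]
      exact Finset.sum_nonneg fun u _ => mul_nonneg (ih s u) (hP0 u s')

lemma Pn_sum {S : Type*} [Fintype S] (P : S → S → ℝ) (hP1 : ∀ s, ∑ s', P s s' = 1) :
    ∀ t s, ∑ s', Pn P t s s' = 1 := by
  intro t
  induction t with
  | zero => intro s; simp [Pn, Pn.eq_1]
  | succ t ih =>
      intro s
      show (∑ s', ∑ u, Pn P t s u * P u s') = 1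
      rw [Finset.sum_comm]
      simp_rw [← Finset.mul_sum, hP1, mul_one]
      exact ih s

lemma pmf_sum_toReal {A : Type*} [Fintype A] (p : PMF A) : ∑ a, (p a).toReal = 1 := by
  have h := p.tsum_coe
  rw [tsum_fintype] at h
  have : (∑ a, p a).toReal = 1 := by rw [h]; rfl
  rwa [ENNReal.toReal_sum (fun a _ => (p.apply_ne_top a))] at this

lemma exp_le_sup {A : Type*} [Fintype A] [Nonempty A] (p : PMF A) (f : A → ℝ) :
    ∑ a, (p a).toReal * f a ≤ Finset.univ.sup' Finset.univ_nonempty f := by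
  calc ∑ a, (p a).toReal * f a
      ≤ ∑ a, (p a).toReal * Finset.univ.sup' Finset.univ_nonempty f := by
        refine Finset.sum_le_sum fun a _ => ?_
        exact mul_le_mul_of_nonneg_left (Finset.le_sup' f (Finset.mem_univ a))
          ENNReal.toReal_nonneg
    _ = Finset.univ.sup' Finset.univ_nonempty f := by
        rw [← Finset.sum_mul, pmf_sum_toReal, one_mul]

lemma summable_aux {S : Type*} [Fintype S] (P : S → S → ℝ)
    (hP0 : ∀ s s', 0 ≤ P s s') (hP1 : ∀ s, ∑ s', P s s' = 1)
    (γ : ℝ) (hγ0 : 0 ≤ γ) (hγ1 : γ < 1) (s : S) (c : S → ℝ) :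
    Summable (fun t : ℕ => γ ^ t * ∑ s', Pn P t s s' * c s') := by
  obtain ⟨M, hM⟩ : ∃ M : ℝ, ∀ s', |c s'| ≤ M := by
    rcases isEmpty_or_nonempty S with h | h
    · exact ⟨0, fun s' => (IsEmpty.false s').elim⟩
    · exact ⟨Finset.univ.sup' Finset.univ_nonempty (fun s' => |c s'|),
        fun s' => Finset.le_sup' (fun s' => |c s'|) (Finset.mem_univ s')⟩
  have : Summable (fun t : ℕ => γ ^ t * M) :=
    (summable_geometric_of_lt_one hγ0 hγ1).mul_right M
  refine this.of_norm_bounded fun t => ?_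
  rw [norm_mul, norm_pow, Real.norm_of_nonneg hγ0]
  refine mul_le_mul_of_nonneg_left ?_ (pow_nonneg hγ0 t)
  calc ‖∑ s', Pn P t s s' * c s'‖ ≤ ∑ s', ‖Pn P t s s' * c s'‖ := norm_sum_le _ _
    _ ≤ ∑ s', Pn P t s s' * M := by
        refine Finset.sum_le_sum fun s' _ => ?_
        rw [norm_mul, Real.norm_of_nonneg (Pn_nonneg P hP0 t s s')]
        exact mul_le_mul_of_nonneg_left (hM s') (Pn_nonneg P hP0 t s s')
    _ = M := by rw [← Finset.sum_mul, Pn_sum P hP1, one_mul]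

lemma greedy_exp {A : Type*} [Fintype A] [Nonempty A] (f : A → ℝ) (a : A)
    (ha : ∀ a', f a' ≤ f a) :
    ∑ a', ((PMF.pure a : PMF A) a').toReal * f a'
      = Finset.univ.sup' Finset.univ_nonempty f := by
  have h1 : ∑ a', ((PMF.pure a : PMF A) a').toReal * f a' = f a := by
    simp [PMF.pure_apply, apply_ite ENNReal.toReal, ite_mul]
  rw [h1]
  exact le_antisymm (Finset.le_sup' f (Finset.mem_univ a))
    (Finset.sup'_le _ _ fun a' _ => ha a')


/-- Theorem 1, discounted version: with an action-independent transition
kernel and rewards depending only on the current state and action, the supremum of the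
discounted value over all stationary stochastic policies equals the discounted sum of
expected maximal one-step rewards, and it is attained by any deterministic greedy policy. -/
theorem discounted_value_sup_eq_greedy {S A : Type*} [Fintype S] [Fintype A]
    [Nonempty S] [Nonempty A]
    (P : S → S → ℝ) (hP0 : ∀ s s', 0 ≤ P s s') (hP1 : ∀ s, ∑ s', P s s' = 1)
    (r : S → A → ℝ)
    (γ : ℝ) (hγ0 : 0 ≤ γ) (hγ1 : γ < 1) (s : S) :
    (⨆ π : S → PMF A, Vdisc P r γ π s)
      = (∑' t : ℕ, γ ^ t * ∑ s', Pn P t s s' *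
          Finset.univ.sup' Finset.univ_nonempty (r s')) ∧
    ∀ πstar : S → PMF A,
      (∀ s' : S, ∃ a : A, (∀ a', r s' a' ≤ r s' a) ∧ πstar s' = PMF.pure a) →
      Vdisc P r γ πstar s = ∑' t : ℕ, γ ^ t * ∑ s', Pn P t s s' *
          Finset.univ.sup' Finset.univ_nonempty (r s') := by

  set T := ∑' t : ℕ, γ ^ t * ∑ s', Pn P t s s' *
      Finset.univ.sup' Finset.univ_nonempty (r s') with hT
  have hgreedy : ∀ πstar : S → PMF A,
      (∀ s' : S, ∃ a : A, (∀ a', r s' a' ≤ r s' a) ∧ πstar s' = PMF.pure a) →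
      Vdisc P r γ πstar s = T := by
    intro πstar hπ
    unfold Vdisc
    refine tsum_congr fun t => ?_
    congr 1
    refine Finset.sum_congr rfl fun s' _ => ?_
    obtain ⟨a, ha, hpa⟩ := hπ s'
    rw [hpa, greedy_exp (r s') a ha]
  have hub : ∀ π : S → PMF A, Vdisc P r γ π s ≤ T := by
    intro π
    unfold Vdisc
    refine Summable.tsum_le_tsum (fun t => ?_)
      (summable_aux P hP0 hP1 γ hγ0 hγ1 s fun s' => ∑ a, ((π s') a).toReal * r s' a)
      (summable_aux P hP0 hP1 γ hγ0 hγ1 s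
        fun s' => Finset.univ.sup' Finset.univ_nonempty (r s'))
    refine mul_le_mul_of_nonneg_left ?_ (pow_nonneg hγ0 t)
    refine Finset.sum_le_sum fun s' _ => ?_
    exact mul_le_mul_of_nonneg_left (exp_le_sup (π s') (r s')) (Pn_nonneg P hP0 t s s')
  have hexists : ∀ s' : S, ∃ a : A, ∀ a', r s' a' ≤ r s' a := by
    intro s'
    obtain ⟨a, -, ha⟩ := Finset.exists_max_image Finset.univ (r s') Finset.univ_nonempty
    exact ⟨a, fun a' => ha a' (Finset.mem_univ a')⟩
  choose g hg using hexists
  have hgT : Vdisc P r γ (fun s' => PMF.pure (g s')) s = T :=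
    hgreedy _ fun s' => ⟨g s', hg s', rfl⟩
  constructor
  · refine le_antisymm (ciSup_le hub) ?_
    rw [← hgT]
    exact le_ciSup ⟨T, fun x ⟨π, hx⟩ => hx ▸ hub π⟩ _
  · exact hgreedy


end
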